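/- arXiv:2505.22565 — 3 statements merged into one kernel-verified Lean document; each statement's English description precedes it below -/
import Mathlib

section
/- Let H1, H2, H3, H4 be subgroups of a finite group G with H1 ∩ H3 = 1 (trivial). Then the Ingleton inequality holds for (H1, H2, H3, H4). -/
open Subgroup Pointwise

private lemma key_ineq {G : Type*} [Group G] [Finite G] (A B C : Subgroup G)
    (hA : A ≤ C) (hB : B ≤ C) :
    Nat.card A * Nat.card B ≤ Nat.card (A ⊓ B : Subgroup G) * Nat.card C := by
  classical
  have hrep : ∀ x : G, x ∈ (A : Set G) * (B : Set G) →
      ∃ p : G × G, p.1 ∈ A ∧ p.2 ∈ B ∧ p.1 * p.2 = x := by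
    rintro x ⟨a, ha, b, hb, rfl⟩
    exact ⟨(a, b), ha, hb, rfl⟩
  choose rep h1 h2 h3 using hrep
  rw [← Nat.card_prod, ← Nat.card_prod]
  apply Nat.card_le_card_of_injective
    (f := fun p : A × B =>
      have hx : (p.1 : G) * p.2 ∈ (A : Set G) * (B : Set G) :=
        Set.mul_mem_mul p.1.2 p.2.2
      ((⟨(rep _ hx).1⁻¹ * p.1, by
          constructor
          · exact A.mul_mem (A.inv_mem (h1 _ hx)) p.1.2
          · have hrel : (rep ((p.1 : G) * p.2) hx).1⁻¹ * (p.1 : G)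
                = (rep ((p.1 : G) * p.2) hx).2 * (p.2 : G)⁻¹ := by
              have h3' := h3 _ hx
              rw [inv_mul_eq_iff_eq_mul, ← mul_assoc, h3', mul_assoc,
                mul_inv_cancel, mul_one]
            rw [hrel]
            exact B.mul_mem (h2 _ hx) (B.inv_mem p.2.2)⟩ : (A ⊓ B : Subgroup G)),
       (⟨(p.1 : G) * p.2, C.mul_mem (hA p.1.2) (hB p.2.2)⟩ : C)))
  rintro ⟨a, b⟩ ⟨a', b'⟩ hfeq
  simp only [Prod.mk.injEq, Subtype.mk.injEq] at hfeq
  obtain ⟨hf1, hf2⟩ := hfeq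
  have hx : (↑a * ↑b : G) ∈ (A : Set G) * (B : Set G) := Set.mul_mem_mul a.2 b.2
  have hx' : (↑a' * ↑b' : G) ∈ (A : Set G) * (B : Set G) := Set.mul_mem_mul a'.2 b'.2
  have hrr : rep (↑a * ↑b) hx = rep (↑a' * ↑b') hx' := by
    congr 1
  replace hf1 : (rep (↑a * ↑b) hx).1⁻¹ * ↑a = (rep (↑a' * ↑b') hx').1⁻¹ * ↑a' :=
    congrArg Subtype.val hf1
  rw [hrr] at hf1
  have ha : (a : G) = a' := mul_left_cancel hf1
  have hb : (b : G) = b' := by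
    rw [ha] at hf2
    exact mul_left_cancel hf2
  exact Prod.ext (Subtype.ext ha) (Subtype.ext hb)

theorem stmt9 {G : Type*} [Group G] [Finite G] (H1 H2 H3 H4 : Subgroup G)
    (h : H1 ⊓ H3 = ⊥) :
    Nat.card (H1 : Subgroup G) * Nat.card (H2 : Subgroup G) * Nat.card (H3 ⊓ H4 : Subgroup G) * Nat.card (H1 ⊓ H2 ⊓ H3 : Subgroup G) * Nat.card (H1 ⊓ H2 ⊓ H4 : Subgroup G) ≥ Nat.card (H1 ⊓ H2 : Subgroup G) * Nat.card (H1 ⊓ H3 : Subgroup G) * Nat.card (H1 ⊓ H4 : Subgroup G) * Nat.card (H2 ⊓ H3 : Subgroup G) * Nat.card (H2 ⊓ H4 : Subgroup G) := by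
  have h123 : H1 ⊓ H2 ⊓ H3 = ⊥ := by
    rw [← le_bot_iff, ← h]
    exact inf_le_inf_right _ inf_le_left
  have c13 : Nat.card (H1 ⊓ H3 : Subgroup G) = 1 := by rw [h]; simp
  have c123 : Nat.card (H1 ⊓ H2 ⊓ H3 : Subgroup G) = 1 := by rw [h123]; simp
  have key1 : Nat.card (H1 ⊓ H2 : Subgroup G) * Nat.card (H1 ⊓ H4 : Subgroup G)
      ≤ Nat.card (H1 ⊓ H2 ⊓ H4 : Subgroup G) * Nat.card H1 := by
    have := key_ineq (H1 ⊓ H2) (H1 ⊓ H4) H1 inf_le_left inf_le_left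
    have heq : (H1 ⊓ H2) ⊓ (H1 ⊓ H4) = H1 ⊓ H2 ⊓ H4 :=
      le_antisymm (le_inf inf_le_left (inf_le_right.trans inf_le_right))
        (le_inf inf_le_left (le_inf (inf_le_left.trans inf_le_left) inf_le_right))
    rwa [heq] at this
  have key2 : Nat.card (H2 ⊓ H3 : Subgroup G) * Nat.card (H2 ⊓ H4 : Subgroup G)
      ≤ Nat.card (H3 ⊓ H4 : Subgroup G) * Nat.card H2 := by
    have h0 := key_ineq (H2 ⊓ H3) (H2 ⊓ H4) H2 inf_le_left inf_le_left
    have hle : (H2 ⊓ H3) ⊓ (H2 ⊓ H4) ≤ H3 ⊓ H4 :=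
      le_inf (inf_le_left.trans inf_le_right) (inf_le_right.trans inf_le_right)
    calc Nat.card (H2 ⊓ H3 : Subgroup G) * Nat.card (H2 ⊓ H4 : Subgroup G)
        ≤ Nat.card ((H2 ⊓ H3) ⊓ (H2 ⊓ H4) : Subgroup G) * Nat.card H2 := h0
      _ ≤ Nat.card (H3 ⊓ H4 : Subgroup G) * Nat.card H2 :=
          Nat.mul_le_mul_right _ (Subgroup.card_le_of_le hle)
  rw [c13, c123]
  have final := Nat.mul_le_mul key1 key2
  simp only [mul_one]
  nlinarith [final]
end

section
/- Let H1, H2, H3, H4 be subgroups of a finite group G with H3 ≤ H1. Then the Ingleton inequality holds for (H1, H2, H3, H4). -/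
private lemma card_mul_card_le {G : Type*} [Group G] [Finite G] {A B C : Subgroup G}
    (hA : A ≤ C) (hB : B ≤ C) :
    Nat.card A * Nat.card B ≤ Nat.card C * Nat.card (A ⊓ B : Subgroup G) := by
  have hcardB : Nat.card (A ⊓ B : Subgroup G) * A.relIndex B = Nat.card B := by
    rw [← Subgroup.inf_relIndex_right (H := A) (K := B)]
    have := Subgroup.card_mul_index ((A ⊓ B).subgroupOf B)
    rwa [Nat.card_congr (Subgroup.subgroupOfEquivOfLe inf_le_right).toEquiv] at this
  have hcardC : Nat.card A * A.relIndex C = Nat.card C := by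
    have := Subgroup.card_mul_index (A.subgroupOf C)
    rwa [Nat.card_congr (Subgroup.subgroupOfEquivOfLe hA).toEquiv] at this
  have hle : A.relIndex B ≤ A.relIndex C := by
    apply Subgroup.relIndex_le_of_le_right hB
    exact Subgroup.FiniteIndex.index_ne_zero (H := A.subgroupOf C)
  calc Nat.card A * Nat.card B = Nat.card A * (Nat.card (A ⊓ B : Subgroup G) * A.relIndex B) := by
        rw [hcardB]
    _ ≤ Nat.card A * (Nat.card (A ⊓ B : Subgroup G) * A.relIndex C) := by
        exact Nat.mul_le_mul_left _ (Nat.mul_le_mul_left _ hle)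
    _ = Nat.card C * Nat.card (A ⊓ B : Subgroup G) := by
        rw [← hcardC]; ring

theorem stmt12 {G : Type*} [Group G] [Finite G] (H1 H2 H3 H4 : Subgroup G)
    (h : H3 ≤ H1) :
    Nat.card (H1 : Subgroup G) * Nat.card (H2 : Subgroup G) * Nat.card (H3 ⊓ H4 : Subgroup G) * Nat.card (H1 ⊓ H2 ⊓ H3 : Subgroup G) * Nat.card (H1 ⊓ H2 ⊓ H4 : Subgroup G) ≥ Nat.card (H1 ⊓ H2 : Subgroup G) * Nat.card (H1 ⊓ H3 : Subgroup G) * Nat.card (H1 ⊓ H4 : Subgroup G) * Nat.card (H2 ⊓ H3 : Subgroup G) * Nat.card (H2 ⊓ H4 : Subgroup G) := by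
  have e1 : H1 ⊓ H3 = H3 := inf_eq_right.mpr h
  have e2 : H1 ⊓ H2 ⊓ H3 = H2 ⊓ H3 := by
    rw [inf_assoc, inf_comm H2 H3, ← inf_assoc, e1]
  have key1 : Nat.card H3 * Nat.card (H1 ⊓ H4 : Subgroup G) ≤
      Nat.card H1 * Nat.card (H3 ⊓ H4 : Subgroup G) := by
    have := card_mul_card_le (A := H3) (B := H1 ⊓ H4) (C := H1) h inf_le_left
    rwa [show H3 ⊓ (H1 ⊓ H4) = H3 ⊓ H4 by rw [← inf_assoc, inf_of_le_left h]] at this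
  have key2 : Nat.card (H1 ⊓ H2 : Subgroup G) * Nat.card (H2 ⊓ H4 : Subgroup G) ≤
      Nat.card H2 * Nat.card (H1 ⊓ H2 ⊓ H4 : Subgroup G) := by
    have := card_mul_card_le (A := H1 ⊓ H2) (B := H2 ⊓ H4) (C := H2) inf_le_right inf_le_left
    rwa [show H1 ⊓ H2 ⊓ (H2 ⊓ H4) = H1 ⊓ H2 ⊓ H4 by
      rw [inf_assoc H1 H2, ← inf_assoc H2 H2 H4, inf_idem, ← inf_assoc]] at this
  rw [e1, e2, ge_iff_le]
  calc Nat.card (H1 ⊓ H2 : Subgroup G) * Nat.card H3 * Nat.card (H1 ⊓ H4 : Subgroup G) *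
        Nat.card (H2 ⊓ H3 : Subgroup G) * Nat.card (H2 ⊓ H4 : Subgroup G)
      = (Nat.card H3 * Nat.card (H1 ⊓ H4 : Subgroup G)) *
        (Nat.card (H1 ⊓ H2 : Subgroup G) * Nat.card (H2 ⊓ H4 : Subgroup G)) *
        Nat.card (H2 ⊓ H3 : Subgroup G) := by ring
    _ ≤ (Nat.card H1 * Nat.card (H3 ⊓ H4 : Subgroup G)) *
        (Nat.card H2 * Nat.card (H1 ⊓ H2 ⊓ H4 : Subgroup G)) *
        Nat.card (H2 ⊓ H3 : Subgroup G) :=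
        Nat.mul_le_mul_right _ (Nat.mul_le_mul key1 key2)
    _ = Nat.card H1 * Nat.card H2 * Nat.card (H3 ⊓ H4 : Subgroup G) *
        Nat.card (H2 ⊓ H3 : Subgroup G) * Nat.card (H1 ⊓ H2 ⊓ H4 : Subgroup G) := by ring
end

section
/- Let G be a finite group and (H1,H2,H3,H4) an Ingleton offender in G. If K1 is the subgroup generated by H1 ∩ H3 and H1 ∩ H4, then (K1, H2, H3, H4) is also an Ingleton offender. -/
lemma card_eq_relIndex_mul_card_inf {G : Type*} [Group G] [Finite G] (H K : Subgroup G) :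
    Nat.card (K : Subgroup G) = H.relIndex K * Nat.card (H ⊓ K : Subgroup G) := by
  have h1 : H.relIndex K = ((H ⊓ K).subgroupOf K).index := by
    rw [← Subgroup.inf_relIndex_right]; rfl
  have h2 : Nat.card ((H ⊓ K).subgroupOf K) = Nat.card (H ⊓ K : Subgroup G) :=
    Nat.card_congr (Subgroup.subgroupOfEquivOfLe inf_le_right).toEquiv
  rw [h1, ← h2, Subgroup.index_mul_card]

lemma card_mul_card_inf_le {G : Type*} [Group G] [Finite G] {K H1 : Subgroup G}
    (hK : K ≤ H1) (H2 : Subgroup G) :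
    Nat.card (K : Subgroup G) * Nat.card (H1 ⊓ H2 : Subgroup G) ≤
      Nat.card (H1 : Subgroup G) * Nat.card (K ⊓ H2 : Subgroup G) := by
  have hrel : H2.relIndex K ≤ H2.relIndex H1 :=
    Subgroup.relIndex_le_of_le_right hK Subgroup.FiniteIndex.index_ne_zero
  calc Nat.card (K : Subgroup G) * Nat.card (H1 ⊓ H2 : Subgroup G)
      = (H2.relIndex K * Nat.card (H2 ⊓ K : Subgroup G)) * Nat.card (H1 ⊓ H2 : Subgroup G) := by
        rw [← card_eq_relIndex_mul_card_inf]
    _ ≤ (H2.relIndex H1 * Nat.card (H2 ⊓ K : Subgroup G)) * Nat.card (H1 ⊓ H2 : Subgroup G) := by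
        gcongr
    _ = (H2.relIndex H1 * Nat.card (H2 ⊓ H1 : Subgroup G)) * Nat.card (K ⊓ H2 : Subgroup G) := by
        rw [inf_comm K H2, inf_comm H1 H2]; ring
    _ = Nat.card (H1 : Subgroup G) * Nat.card (K ⊓ H2 : Subgroup G) := by
        rw [← card_eq_relIndex_mul_card_inf]

theorem stmt19 {G : Type*} [Group G] [Finite G] (H1 H2 H3 H4 : Subgroup G)
    (hoff : Nat.card (H1 : Subgroup G) * Nat.card (H2 : Subgroup G) * Nat.card (H3 ⊓ H4 : Subgroup G) * Nat.card (H1 ⊓ H2 ⊓ H3 : Subgroup G) * Nat.card (H1 ⊓ H2 ⊓ H4 : Subgroup G) < Nat.card (H1 ⊓ H2 : Subgroup G) * Nat.card (H1 ⊓ H3 : Subgroup G) * Nat.card (H1 ⊓ H4 : Subgroup G) * Nat.card (H2 ⊓ H3 : Subgroup G) * Nat.card (H2 ⊓ H4 : Subgroup G)) :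
    Nat.card (((H1 ⊓ H3) ⊔ (H1 ⊓ H4)) : Subgroup G) * Nat.card (H2 : Subgroup G) * Nat.card (H3 ⊓ H4 : Subgroup G) * Nat.card (((H1 ⊓ H3) ⊔ (H1 ⊓ H4)) ⊓ H2 ⊓ H3 : Subgroup G) * Nat.card (((H1 ⊓ H3) ⊔ (H1 ⊓ H4)) ⊓ H2 ⊓ H4 : Subgroup G) < Nat.card (((H1 ⊓ H3) ⊔ (H1 ⊓ H4)) ⊓ H2 : Subgroup G) * Nat.card (((H1 ⊓ H3) ⊔ (H1 ⊓ H4)) ⊓ H3 : Subgroup G) * Nat.card (((H1 ⊓ H3) ⊔ (H1 ⊓ H4)) ⊓ H4 : Subgroup G) * Nat.card (H2 ⊓ H3 : Subgroup G) * Nat.card (H2 ⊓ H4 : Subgroup G) := by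
  set K : Subgroup G := (H1 ⊓ H3) ⊔ (H1 ⊓ H4) with hKdef
  have hK : K ≤ H1 := sup_le inf_le_left inf_le_left
  have h3 : K ⊓ H3 = H1 ⊓ H3 :=
    le_antisymm (inf_le_inf_right H3 hK) (le_inf le_sup_left inf_le_right)
  have h4 : K ⊓ H4 = H1 ⊓ H4 :=
    le_antisymm (inf_le_inf_right H4 hK) (le_inf le_sup_right inf_le_right)
  have h23 : K ⊓ H2 ⊓ H3 = H1 ⊓ H2 ⊓ H3 := by
    rw [inf_right_comm, h3, inf_right_comm]
  have h24 : K ⊓ H2 ⊓ H4 = H1 ⊓ H2 ⊓ H4 := by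
    rw [inf_right_comm, h4, inf_right_comm]
  rw [h3, h4, h23, h24]
  have key := card_mul_card_inf_le hK H2
  -- abbreviations
  set a := Nat.card (H1 : Subgroup G)
  set b := Nat.card (K : Subgroup G)
  set c := Nat.card (H1 ⊓ H2 : Subgroup G)
  set d := Nat.card (K ⊓ H2 : Subgroup G)
  set A := Nat.card (H2 : Subgroup G) * Nat.card (H3 ⊓ H4 : Subgroup G) *
    Nat.card (H1 ⊓ H2 ⊓ H3 : Subgroup G) * Nat.card (H1 ⊓ H2 ⊓ H4 : Subgroup G)
  set B := Nat.card (H1 ⊓ H3 : Subgroup G) * Nat.card (H1 ⊓ H4 : Subgroup G) *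
    Nat.card (H2 ⊓ H3 : Subgroup G) * Nat.card (H2 ⊓ H4 : Subgroup G)
  have hoff' : a * A < c * B := by
    calc a * A = Nat.card (H1 : Subgroup G) * Nat.card (H2 : Subgroup G) * Nat.card (H3 ⊓ H4 : Subgroup G) * Nat.card (H1 ⊓ H2 ⊓ H3 : Subgroup G) * Nat.card (H1 ⊓ H2 ⊓ H4 : Subgroup G) := by ring
    _ < Nat.card (H1 ⊓ H2 : Subgroup G) * Nat.card (H1 ⊓ H3 : Subgroup G) * Nat.card (H1 ⊓ H4 : Subgroup G) * Nat.card (H2 ⊓ H3 : Subgroup G) * Nat.card (H2 ⊓ H4 : Subgroup G) := hoff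
    _ = c * B := by ring
  have goal' : b * A < d * B := by
    have hc : 0 < c := Nat.card_pos
    have h1 : b * A * c ≤ a * d * A := by
      calc b * A * c = (b * c) * A := by ring
      _ ≤ (a * d) * A := Nat.mul_le_mul_right A key
      _ = a * d * A := rfl
    have h2 : a * d * A = d * (a * A) := by ring
    have h3' : d * (a * A) < d * (c * B) := by
      have hd : 0 < d := Nat.card_pos
      exact (Nat.mul_lt_mul_left hd).mpr hoff'
    have : b * A * c < d * (c * B) := lt_of_le_of_lt (h1.trans_eq h2) h3'
    have : b * A * c < d * B * c := by linarith [this]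
    exact lt_of_mul_lt_mul_right this (le_of_lt hc)
  calc b * Nat.card (H2 : Subgroup G) * Nat.card (H3 ⊓ H4 : Subgroup G) * Nat.card (H1 ⊓ H2 ⊓ H3 : Subgroup G) * Nat.card (H1 ⊓ H2 ⊓ H4 : Subgroup G) = b * A := by ring
  _ < d * B := goal'
  _ = d * Nat.card (H1 ⊓ H3 : Subgroup G) * Nat.card (H1 ⊓ H4 : Subgroup G) * Nat.card (H2 ⊓ H3 : Subgroup G) * Nat.card (H2 ⊓ H4 : Subgroup G) := by ring
end
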